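/- In the constrained GC-content Hamming ball formula, for any center with GC content w and parameters r, Δ, i₊ with max(0, Δ) ≤ i₊ ≤ min(Δ + w, r), the number of sequences obtained from the center by exactly i₊ substitutions from {A,T} to {G,C}, exactly i₊ − Δ substitutions from {G,C} to {A,T}, and r − 2i₊ + Δ GC-preserving substitutions equals binom(w, i₊−Δ)·binom(n−w, i₊)·binom(n − 2i₊ + Δ, r − 2i₊ + Δ)·2^{2i₊−Δ}, and each such sequence has GC content w + Δ and Hamming distance exactly r from the center. -/

import Mathlib

def isGC (a : Fin 4) : Prop := a = 1 ∨ a = 2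

instance : DecidablePred isGC := fun a => by unfold isGC; infer_instance

def gcCount {n : ℕ} (x : Fin n → Fin 4) : ℕ :=
  (Finset.univ.filter fun i => isGC (x i)).card

open Finset

def swap4 : Fin 4 → Fin 4 := ![3, 2, 1, 0]

lemma swap4_ne : ∀ a : Fin 4, swap4 a ≠ a := by decide
lemma isGC_swap4 : ∀ a : Fin 4, (isGC (swap4 a) ↔ isGC a) := by decide
lemma eq_swap4 : ∀ (a b : Fin 4), a ≠ b → (isGC a ↔ isGC b) → b = swap4 a := by decide
lemma mem_GCset : ∀ b : Fin 4, b ∈ ({1,2} : Finset (Fin 4)) ↔ isGC b := by decide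
lemma mem_ATset : ∀ b : Fin 4, b ∈ ({0,3} : Finset (Fin 4)) ↔ ¬ isGC b := by decide

lemma fiber_eq_piFinset {n : ℕ} (X : Fin n → Fin 4)
    (Sp Sm S0 : Finset (Fin n))
    (hSp : ∀ i ∈ Sp, ¬ isGC (X i)) (hSm : ∀ i ∈ Sm, isGC (X i))
    (hd : ∀ i ∈ S0, i ∉ Sp ∧ i ∉ Sm) :
    (univ.filter fun Y : Fin n → Fin 4 =>
       (univ.filter fun i => ¬ isGC (X i) ∧ isGC (Y i)) = Sp ∧
       (univ.filter fun i => isGC (X i) ∧ ¬ isGC (Y i)) = Sm ∧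
       (univ.filter fun i => X i ≠ Y i ∧ (isGC (X i) ↔ isGC (Y i))) = S0)
    = Fintype.piFinset (fun i =>
        if i ∈ Sp then ({1,2} : Finset (Fin 4))
        else if i ∈ Sm then {0,3}
        else if i ∈ S0 then {swap4 (X i)} else {X i}) := by
  ext Y
  simp only [mem_filter, mem_univ, true_and, Fintype.mem_piFinset]
  constructor
  · rintro ⟨e1, e2, e3⟩ i
    by_cases h1 : i ∈ Sp
    · rw [if_pos h1]
      have : i ∈ univ.filter fun i => ¬ isGC (X i) ∧ isGC (Y i) := e1 ▸ h1
      simp only [mem_filter, mem_univ, true_and] at this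
      exact (mem_GCset _).2 this.2
    · rw [if_neg h1]
      by_cases h2 : i ∈ Sm
      · rw [if_pos h2]
        have : i ∈ univ.filter fun i => isGC (X i) ∧ ¬ isGC (Y i) := e2 ▸ h2
        simp only [mem_filter, mem_univ, true_and] at this
        exact (mem_ATset _).2 this.2
      · rw [if_neg h2]
        by_cases h3 : i ∈ S0
        · rw [if_pos h3]
          have : i ∈ univ.filter fun i => X i ≠ Y i ∧ (isGC (X i) ↔ isGC (Y i)) := e3 ▸ h3
          simp only [mem_filter, mem_univ, true_and] at this
          simp [eq_swap4 _ _ this.1 this.2]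
        · rw [if_neg h3]
          simp only [mem_singleton]
          by_contra hne
          have hne' : X i ≠ Y i := fun h => hne h.symm
          by_cases hc : isGC (X i) ↔ isGC (Y i)
          · exact h3 (e3 ▸ (mem_filter.2 ⟨mem_univ i, hne', hc⟩))
          · by_cases hx : isGC (X i)
            · have hy : ¬ isGC (Y i) := fun hy => hc ⟨fun _ => hy, fun _ => hx⟩
              exact h2 (e2 ▸ (mem_filter.2 ⟨mem_univ i, hx, hy⟩))
            · have hy : isGC (Y i) := by
                by_contra hy
                exact hc ⟨fun h => absurd h hx, fun h => absurd h hy⟩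
              exact h1 (e1 ▸ (mem_filter.2 ⟨mem_univ i, hx, hy⟩))
  · intro h
    have key : ∀ i, ((¬ isGC (X i) ∧ isGC (Y i)) ↔ i ∈ Sp)
        ∧ ((isGC (X i) ∧ ¬ isGC (Y i)) ↔ i ∈ Sm)
        ∧ ((X i ≠ Y i ∧ (isGC (X i) ↔ isGC (Y i))) ↔ i ∈ S0) := by
      intro i
      have hi := h i
      by_cases h1 : i ∈ Sp
      · rw [if_pos h1] at hi
        have hy : isGC (Y i) := (mem_GCset _).1 hi
        have hx := hSp i h1
        refine ⟨⟨fun _ => h1, fun _ => ⟨hx, hy⟩⟩, ?_, ?_⟩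
        · constructor
          · rintro ⟨hx', _⟩; exact absurd hx' hx
          · intro hm; exact absurd (hSm i hm) hx
        · constructor
          · rintro ⟨_, hc⟩; exact absurd (hc.2 hy) hx
          · intro h0; exact absurd h1 (hd i h0).1
      · rw [if_neg h1] at hi
        by_cases h2 : i ∈ Sm
        · rw [if_pos h2] at hi
          have hy : ¬ isGC (Y i) := (mem_ATset _).1 hi
          have hx := hSm i h2
          refine ⟨?_, ⟨fun _ => h2, fun _ => ⟨hx, hy⟩⟩, ?_⟩
          · constructor
            · rintro ⟨hx', _⟩; exact absurd hx hx'
            · intro hm; exact absurd hm h1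
          · constructor
            · rintro ⟨_, hc⟩; exact absurd (hc.1 hx) hy
            · intro h0; exact absurd h2 (hd i h0).2
        · rw [if_neg h2] at hi
          by_cases h3 : i ∈ S0
          · rw [if_pos h3] at hi
            simp only [mem_singleton] at hi
            have hne : X i ≠ Y i := hi ▸ (swap4_ne (X i)).symm
            have hc : isGC (X i) ↔ isGC (Y i) := hi ▸ (isGC_swap4 (X i)).symm
            refine ⟨?_, ?_, ⟨fun _ => h3, fun _ => ⟨hne, hc⟩⟩⟩
            · constructor
              · rintro ⟨hx', hy'⟩; exact absurd (hc.2 hy') hx'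
              · intro hm; exact absurd hm h1
            · constructor
              · rintro ⟨hx', hy'⟩; exact absurd (hc.1 hx') hy'
              · intro hm; exact absurd hm h2
          · rw [if_neg h3] at hi
            simp only [mem_singleton] at hi
            refine ⟨?_, ?_, ?_⟩
            · constructor
              · rintro ⟨hx', hy'⟩; rw [hi] at hy'; exact absurd hy' hx'
              · intro hm; exact absurd hm h1
            · constructor
              · rintro ⟨hx', hy'⟩; rw [hi] at hy'; exact absurd hx' hy'
              · intro hm; exact absurd hm h2
            · constructor
              · rintro ⟨hne, _⟩; exact absurd hi.symm hne
              · intro hm; exact absurd hm h3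
    refine ⟨?_, ?_, ?_⟩ <;> ext i <;> simp only [mem_filter, mem_univ, true_and]
    · exact (key i).1
    · exact (key i).2.1
    · exact (key i).2.2

lemma fiber_card {n : ℕ} (X : Fin n → Fin 4)
    (Sp Sm S0 : Finset (Fin n))
    (hSp : ∀ i ∈ Sp, ¬ isGC (X i)) (hSm : ∀ i ∈ Sm, isGC (X i))
    (hd : ∀ i ∈ S0, i ∉ Sp ∧ i ∉ Sm) :
    (univ.filter fun Y : Fin n → Fin 4 =>
       (univ.filter fun i => ¬ isGC (X i) ∧ isGC (Y i)) = Sp ∧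
       (univ.filter fun i => isGC (X i) ∧ ¬ isGC (Y i)) = Sm ∧
       (univ.filter fun i => X i ≠ Y i ∧ (isGC (X i) ↔ isGC (Y i))) = S0).card
    = 2 ^ (Sp.card + Sm.card) := by
  classical
  rw [fiber_eq_piFinset X Sp Sm S0 hSp hSm hd, Fintype.card_piFinset]
  have hdisj : Disjoint Sp Sm := by
    rw [Finset.disjoint_left]
    intro i hip him
    exact (hSp i hip) (hSm i him)
  have hcards : ∀ i : Fin n,
      (if i ∈ Sp then ({1,2} : Finset (Fin 4))
        else if i ∈ Sm then {0,3}
        else if i ∈ S0 then {swap4 (X i)} else {X i}).card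
      = if i ∈ Sp ∪ Sm then 2 else 1 := by
    intro i
    by_cases h1 : i ∈ Sp
    · simp [h1]
    · by_cases h2 : i ∈ Sm
      · simp [h1, h2]
      · by_cases h3 : i ∈ S0 <;> simp [h1, h2, h3]
  calc ∏ i : Fin n, (if i ∈ Sp then ({1,2} : Finset (Fin 4))
        else if i ∈ Sm then {0,3}
        else if i ∈ S0 then {swap4 (X i)} else {X i}).card
      = ∏ i : Fin n, (if i ∈ Sp ∪ Sm then 2 else 1) := by
        exact Finset.prod_congr rfl (fun i _ => hcards i)
    _ = ∏ i ∈ univ ∩ (Sp ∪ Sm), 2 := Finset.prod_ite_mem _ _ _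
    _ = 2 ^ (Sp.card + Sm.card) := by
        rw [Finset.univ_inter, Finset.prod_const, Finset.card_union_of_disjoint hdisj]

lemma fiber_empty {n : ℕ} (X : Fin n → Fin 4)
    (Sp Sm S0 : Finset (Fin n))
    (i0 : Fin n) (hi0 : i0 ∈ S0) (hbad : i0 ∈ Sp ∨ i0 ∈ Sm) :
    (univ.filter fun Y : Fin n → Fin 4 =>
       (univ.filter fun i => ¬ isGC (X i) ∧ isGC (Y i)) = Sp ∧
       (univ.filter fun i => isGC (X i) ∧ ¬ isGC (Y i)) = Sm ∧
       (univ.filter fun i => X i ≠ Y i ∧ (isGC (X i) ↔ isGC (Y i))) = S0) = ∅ := by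
  rw [Finset.eq_empty_iff_forall_notMem]
  intro Y hY
  simp only [mem_filter, mem_univ, true_and] at hY
  obtain ⟨e1, e2, e3⟩ := hY
  have h0 : i0 ∈ univ.filter fun i => X i ≠ Y i ∧ (isGC (X i) ↔ isGC (Y i)) := e3 ▸ hi0
  simp only [mem_filter, mem_univ, true_and] at h0
  rcases hbad with hb | hb
  · have h1 : i0 ∈ univ.filter fun i => ¬ isGC (X i) ∧ isGC (Y i) := e1 ▸ hb
    simp only [mem_filter, mem_univ, true_and] at h1
    exact h1.1 (h0.2.2 h1.2)
  · have h1 : i0 ∈ univ.filter fun i => isGC (X i) ∧ ¬ isGC (Y i) := e2 ▸ hb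
    simp only [mem_filter, mem_univ, true_and] at h1
    exact h1.2 (h0.2.1 h1.1)

lemma core_count (n : ℕ) (X : Fin n → Fin 4) (ip im s : ℕ) :
    (univ.filter fun Y : Fin n → Fin 4 =>
        (univ.filter fun i => ¬ isGC (X i) ∧ isGC (Y i)).card = ip ∧
        (univ.filter fun i => isGC (X i) ∧ ¬ isGC (Y i)).card = im ∧
        (univ.filter fun i => X i ≠ Y i ∧ (isGC (X i) ↔ isGC (Y i))).card = s).card
    = (gcCount X).choose im * (n - gcCount X).choose ip * (n - (ip + im)).choose s
        * 2 ^ (ip + im) := by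
  classical
  set w := gcCount X with hw
  set A : Finset (Fin n) := univ.filter fun i => ¬ isGC (X i) with hA
  set G : Finset (Fin n) := univ.filter fun i => isGC (X i) with hG
  have hGcard : G.card = w := rfl
  have hAcard : A.card = n - w := by
    have h := Finset.card_filter_add_card_filter_not (s := (univ : Finset (Fin n)))
      (p := fun i => isGC (X i))
    rw [Finset.card_univ, Fintype.card_fin] at h
    have h2 : (univ.filter fun i => isGC (X i)).card = w := rfl
    have h3 : (univ.filter fun i => ¬ isGC (X i)).card = A.card := rfl
    omega
  set P := (A.powersetCard ip) ×ˢ ((G.powersetCard im) ×ˢ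
      ((univ : Finset (Fin n)).powersetCard s)) with hP
  set Φ : (Fin n → Fin 4) → Finset (Fin n) × Finset (Fin n) × Finset (Fin n) :=
    fun Y => ((univ.filter fun i => ¬ isGC (X i) ∧ isGC (Y i)),
      (univ.filter fun i => isGC (X i) ∧ ¬ isGC (Y i)),
      (univ.filter fun i => X i ≠ Y i ∧ (isGC (X i) ↔ isGC (Y i)))) with hΦ
  set T := (univ.filter fun Y : Fin n → Fin 4 =>
        (univ.filter fun i => ¬ isGC (X i) ∧ isGC (Y i)).card = ip ∧
        (univ.filter fun i => isGC (X i) ∧ ¬ isGC (Y i)).card = im ∧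
        (univ.filter fun i => X i ≠ Y i ∧ (isGC (X i) ↔ isGC (Y i))).card = s) with hT
  have hmem : ∀ Y ∈ T, Φ Y ∈ P := by
    intro Y hY
    rw [hT, mem_filter] at hY
    obtain ⟨-, c1, c2, c3⟩ := hY
    rw [hP, Finset.mem_product, Finset.mem_product]
    refine ⟨?_, ?_, ?_⟩ <;> rw [Finset.mem_powersetCard]
    · exact ⟨fun i hi => by simp only [hA, hΦ, mem_filter] at hi ⊢; tauto, c1⟩
    · exact ⟨fun i hi => by simp only [hG, hΦ, mem_filter] at hi ⊢; tauto, c2⟩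
    · exact ⟨fun i hi => mem_univ i, c3⟩
  rw [Finset.card_eq_sum_card_fiberwise hmem]
  have hfib : ∀ p ∈ P, (T.filter fun Y => Φ Y = p).card
      = (univ.filter fun Y : Fin n → Fin 4 => Φ Y = p).card := by
    intro p hp
    congr 1
    rw [hT, Finset.filter_filter]
    apply Finset.filter_congr
    intro Y _
    rw [hP, Finset.mem_product, Finset.mem_product] at hp
    constructor
    · exact fun h => h.2
    · intro h
      refine ⟨⟨?_, ?_, ?_⟩, h⟩
      · rw [show (univ.filter fun i => ¬ isGC (X i) ∧ isGC (Y i)) = p.1 from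
          congrArg Prod.fst h]
        exact (Finset.mem_powersetCard.1 hp.1).2
      · rw [show (univ.filter fun i => isGC (X i) ∧ ¬ isGC (Y i)) = p.2.1 from
          congrArg Prod.fst (congrArg Prod.snd h)]
        exact (Finset.mem_powersetCard.1 hp.2.1).2
      · rw [show (univ.filter fun i => X i ≠ Y i ∧ (isGC (X i) ↔ isGC (Y i))) = p.2.2 from
          congrArg Prod.snd (congrArg Prod.snd h)]
        exact (Finset.mem_powersetCard.1 hp.2.2).2
  rw [Finset.sum_congr rfl hfib]
  rw [hP, Finset.sum_product]
  have hinner : ∀ Sp ∈ A.powersetCard ip, ∀ q ∈ (G.powersetCard im) ×ˢ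
      ((univ : Finset (Fin n)).powersetCard s),
      (univ.filter fun Y : Fin n → Fin 4 => Φ Y = (Sp, q)).card
      = if q.2 ⊆ (Sp ∪ q.1)ᶜ then 2 ^ (ip + im) else 0 := by
    intro Sp hSp q hq
    rw [Finset.mem_product] at hq
    obtain ⟨hSpA, hSpc⟩ := Finset.mem_powersetCard.1 hSp
    obtain ⟨hSmG, hSmc⟩ := Finset.mem_powersetCard.1 hq.1
    have hSp' : ∀ i ∈ Sp, ¬ isGC (X i) := by
      intro i hi; have := hSpA hi; rw [hA, mem_filter] at this; exact this.2
    have hSm' : ∀ i ∈ q.1, isGC (X i) := by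
      intro i hi; have := hSmG hi; rw [hG, mem_filter] at this; exact this.2
    have hΦeq : (univ.filter fun Y : Fin n → Fin 4 => Φ Y = (Sp, q))
        = univ.filter fun Y => ((univ.filter fun i => ¬ isGC (X i) ∧ isGC (Y i)) = Sp ∧
          (univ.filter fun i => isGC (X i) ∧ ¬ isGC (Y i)) = q.1 ∧
          (univ.filter fun i => X i ≠ Y i ∧ (isGC (X i) ↔ isGC (Y i))) = q.2) := by
      apply Finset.filter_congr
      intro Y _
      simp only [hΦ, Prod.mk.injEq, Prod.ext_iff]
    rw [hΦeq]
    by_cases hdis : q.2 ⊆ (Sp ∪ q.1)ᶜ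
    · rw [if_pos hdis]
      have hd : ∀ i ∈ q.2, i ∉ Sp ∧ i ∉ q.1 := by
        intro i hi
        have := hdis hi
        rw [Finset.mem_compl, Finset.mem_union] at this
        tauto
      rw [fiber_card X Sp q.1 q.2 hSp' hSm' hd, hSpc, hSmc]
    · rw [if_neg hdis]
      rw [Finset.card_eq_zero]
      rw [Finset.not_subset] at hdis
      obtain ⟨i0, hi0, hbad⟩ := hdis
      rw [Finset.mem_compl, Finset.mem_union] at hbad
      push_neg at hbad
      exact fiber_empty X Sp q.1 q.2 i0 hi0 hbad
  calc ∑ Sp ∈ A.powersetCard ip, ∑ q ∈ (G.powersetCard im) ×ˢ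
        ((univ : Finset (Fin n)).powersetCard s),
        (univ.filter fun Y : Fin n → Fin 4 => Φ Y = (Sp, q)).card
      = ∑ Sp ∈ A.powersetCard ip, ∑ q ∈ (G.powersetCard im) ×ˢ
        ((univ : Finset (Fin n)).powersetCard s),
        (if q.2 ⊆ (Sp ∪ q.1)ᶜ then 2 ^ (ip + im) else 0) := by
        refine Finset.sum_congr rfl fun Sp hSp => Finset.sum_congr rfl fun q hq => ?_
        exact hinner Sp hSp q hq
    _ = ∑ Sp ∈ A.powersetCard ip, ∑ Sm ∈ G.powersetCard im,
        ∑ S0 ∈ (univ : Finset (Fin n)).powersetCard s,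
        (if S0 ⊆ (Sp ∪ Sm)ᶜ then 2 ^ (ip + im) else 0) := by
        refine Finset.sum_congr rfl fun Sp _ => ?_
        rw [Finset.sum_product]
    _ = ∑ Sp ∈ A.powersetCard ip, ∑ Sm ∈ G.powersetCard im,
        ((n - (ip + im)).choose s * 2 ^ (ip + im)) := by
        refine Finset.sum_congr rfl fun Sp hSp => Finset.sum_congr rfl fun Sm hSm => ?_
        obtain ⟨hSpA, hSpc⟩ := Finset.mem_powersetCard.1 hSp
        obtain ⟨hSmG, hSmc⟩ := Finset.mem_powersetCard.1 hSm
        rw [← Finset.sum_filter]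
        have hfe : ((univ : Finset (Fin n)).powersetCard s).filter
            (fun S0 => S0 ⊆ (Sp ∪ Sm)ᶜ) = ((Sp ∪ Sm)ᶜ).powersetCard s := by
          ext z
          simp only [Finset.mem_filter, Finset.mem_powersetCard]
          constructor
          · rintro ⟨⟨-, hc⟩, hz⟩; exact ⟨hz, hc⟩
          · rintro ⟨hz, hc⟩; exact ⟨⟨Finset.subset_univ z, hc⟩, hz⟩
        rw [hfe, Finset.sum_const, Finset.card_powersetCard, smul_eq_mul]
        congr 2
        have hdisj : Disjoint Sp Sm := by
          rw [Finset.disjoint_left]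
          intro i hip him
          have h1 := hSpA hip; have h2 := hSmG him
          rw [hA, mem_filter] at h1; rw [hG, mem_filter] at h2
          exact h1.2 h2.2
        rw [Finset.card_compl, Finset.card_union_of_disjoint hdisj, hSpc, hSmc,
          Fintype.card_fin]
    _ = (gcCount X).choose im * (n - gcCount X).choose ip * (n - (ip + im)).choose s
        * 2 ^ (ip + im) := by
        rw [Finset.sum_const, Finset.sum_const, Finset.card_powersetCard,
          Finset.card_powersetCard, hAcard, hGcard, smul_eq_mul, smul_eq_mul, ← hw]
        ring
/-- Inner term of the constrained GC-content Hamming ball formula: for a center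
`X` with GC content `w` and parameters `r`, `Δ`, `i₊` with
`max(0,Δ) ≤ i₊ ≤ min(Δ+w, r)` (and nonnegatively many preserving
substitutions), the number of sequences `Y` differing from `X` by exactly `i₊`
AT→GC substitutions, `i₊ − Δ` GC→AT substitutions and `r − 2i₊ + Δ`
GC-preserving substitutions equals
`binom(w, i₊−Δ)·binom(n−w, i₊)·binom(n−2i₊+Δ, r−2i₊+Δ)·2^{2i₊−Δ}`, and each
such `Y` has GC content `w + Δ` and Hamming distance exactly `r` from `X`. -/
theorem gc_ball_inner_term_card (n w r : ℕ) (Δ : ℤ) (iplus : ℕ)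
    (X : Fin n → Fin 4) (hX : gcCount X = w)
    (h1 : max 0 Δ ≤ (iplus : ℤ))
    (h2 : (iplus : ℤ) ≤ min (Δ + w) (r : ℤ))
    (h3 : 0 ≤ (r : ℤ) - 2 * iplus + Δ) :
    ((Finset.univ.filter fun Y : Fin n → Fin 4 =>
        (Finset.univ.filter fun i => ¬ isGC (X i) ∧ isGC (Y i)).card = iplus ∧
        ((Finset.univ.filter fun i => isGC (X i) ∧ ¬ isGC (Y i)).card : ℤ)
          = (iplus : ℤ) - Δ ∧
        ((Finset.univ.filter fun i =>
            X i ≠ Y i ∧ (isGC (X i) ↔ isGC (Y i))).card : ℤ)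
          = (r : ℤ) - 2 * iplus + Δ).card : ℤ)
      = (Nat.choose w ((iplus : ℤ) - Δ).toNat : ℤ) *
        (Nat.choose (n - w) iplus : ℤ) *
        (Nat.choose ((n : ℤ) - 2 * iplus + Δ).toNat
            ((r : ℤ) - 2 * iplus + Δ).toNat : ℤ) *
        2 ^ (2 * (iplus : ℤ) - Δ).toNat ∧
    ∀ Y : Fin n → Fin 4,
      ((Finset.univ.filter fun i => ¬ isGC (X i) ∧ isGC (Y i)).card = iplus ∧
        ((Finset.univ.filter fun i => isGC (X i) ∧ ¬ isGC (Y i)).card : ℤ)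
          = (iplus : ℤ) - Δ ∧
        ((Finset.univ.filter fun i =>
            X i ≠ Y i ∧ (isGC (X i) ↔ isGC (Y i))).card : ℤ)
          = (r : ℤ) - 2 * iplus + Δ) →
      (gcCount Y : ℤ) = (w : ℤ) + Δ ∧ hammingDist X Y = r := by
  classical
  have hΔ : Δ ≤ (iplus : ℤ) := le_trans (le_max_right 0 Δ) h1
  set im : ℕ := ((iplus : ℤ) - Δ).toNat with him_def
  have him : (im : ℤ) = (iplus : ℤ) - Δ := Int.toNat_of_nonneg (by omega)
  set s : ℕ := ((r : ℤ) - 2 * iplus + Δ).toNat with hs_def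
  have hs : (s : ℤ) = (r : ℤ) - 2 * iplus + Δ := Int.toNat_of_nonneg h3
  have split : ∀ (Y : Fin n → Fin 4) (p q : Fin n → Prop) (hp : DecidablePred p)
      (hq : DecidablePred q),
      (univ.filter fun i => p i ∧ q i).card + (univ.filter fun i => p i ∧ ¬ q i).card
        = (univ.filter fun i => p i).card := by
    intro Y p q hp hq
    have h := Finset.card_filter_add_card_filter_not
      (s := univ.filter fun i => p i) (p := fun i => q i)
    rw [Finset.filter_filter, Finset.filter_filter] at h
    exact h
  constructor
  · have hfilter : (Finset.univ.filter fun Y : Fin n → Fin 4 =>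
        (Finset.univ.filter fun i => ¬ isGC (X i) ∧ isGC (Y i)).card = iplus ∧
        ((Finset.univ.filter fun i => isGC (X i) ∧ ¬ isGC (Y i)).card : ℤ)
          = (iplus : ℤ) - Δ ∧
        ((Finset.univ.filter fun i =>
            X i ≠ Y i ∧ (isGC (X i) ↔ isGC (Y i))).card : ℤ)
          = (r : ℤ) - 2 * iplus + Δ)
        = Finset.univ.filter fun Y : Fin n → Fin 4 =>
        (Finset.univ.filter fun i => ¬ isGC (X i) ∧ isGC (Y i)).card = iplus ∧
        (Finset.univ.filter fun i => isGC (X i) ∧ ¬ isGC (Y i)).card = im ∧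
        (Finset.univ.filter fun i =>
            X i ≠ Y i ∧ (isGC (X i) ↔ isGC (Y i))).card = s := by
      apply Finset.filter_congr
      intro Y _
      constructor
      · rintro ⟨a, b, c⟩; refine ⟨a, by omega, by omega⟩
      · rintro ⟨a, b, c⟩; refine ⟨a, by omega, by omega⟩
    rw [hfilter, core_count n X iplus im s, hX]
    have e1 : ((n : ℤ) - 2 * iplus + Δ).toNat = n - (iplus + im) := by omega
    have e2 : (2 * (iplus : ℤ) - Δ).toNat = iplus + im := by omega
    rw [e1, e2]
    push_cast
    ring
  · rintro Y ⟨c1, c2, c3⟩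
    set a := (univ.filter fun i => isGC (X i) ∧ isGC (Y i)).card with ha
    have hY1 : a + (univ.filter fun i => isGC (X i) ∧ ¬ isGC (Y i)).card = w := by
      rw [← hX]; exact split Y _ _ _ _
    have hY2 : (univ.filter fun i => isGC (Y i) ∧ isGC (X i)).card
        + (univ.filter fun i => isGC (Y i) ∧ ¬ isGC (X i)).card = gcCount Y :=
      split Y _ _ _ _
    have hcomm1 : (univ.filter fun i => isGC (Y i) ∧ isGC (X i)).card = a := by
      rw [ha]; congr 1; apply Finset.filter_congr; intro i _; exact and_comm
    have hcomm2 : (univ.filter fun i => isGC (Y i) ∧ ¬ isGC (X i)).card = iplus := by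
      rw [← c1]; congr 1; apply Finset.filter_congr; intro i _; exact and_comm
    constructor
    · rw [hcomm1, hcomm2] at hY2
      omega
    · -- Hamming distance
      have hham : hammingDist X Y = (univ.filter fun i => X i ≠ Y i).card := rfl
      have hsplit1 : (univ.filter fun i => X i ≠ Y i ∧ (isGC (X i) ↔ isGC (Y i))).card
          + (univ.filter fun i => X i ≠ Y i ∧ ¬ (isGC (X i) ↔ isGC (Y i))).card
          = (univ.filter fun i => X i ≠ Y i).card := split Y _ _ _ _
      have hne : (univ.filter fun i => X i ≠ Y i ∧ ¬ (isGC (X i) ↔ isGC (Y i))).card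
          = (univ.filter fun i => ¬ (isGC (X i) ↔ isGC (Y i))).card := by
        congr 1
        apply Finset.filter_congr
        intro i _
        constructor
        · exact fun h => h.2
        · intro h
          refine ⟨fun heq => h (by rw [heq]), h⟩
      have hsplit2 : (univ.filter fun i => ¬ (isGC (X i) ↔ isGC (Y i)) ∧ isGC (X i)).card
          + (univ.filter fun i => ¬ (isGC (X i) ↔ isGC (Y i)) ∧ ¬ isGC (X i)).card
          = (univ.filter fun i => ¬ (isGC (X i) ↔ isGC (Y i))).card := split Y _ _ _ _
      have he1 : (univ.filter fun i => ¬ (isGC (X i) ↔ isGC (Y i)) ∧ isGC (X i)).card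
          = (univ.filter fun i => isGC (X i) ∧ ¬ isGC (Y i)).card := by
        congr 1; apply Finset.filter_congr; intro i _
        constructor
        · rintro ⟨hiff, hx⟩; exact ⟨hx, fun hy => hiff ⟨fun _ => hy, fun _ => hx⟩⟩
        · rintro ⟨hx, hy⟩; exact ⟨fun hiff => hy (hiff.1 hx), hx⟩
      have he2 : (univ.filter fun i => ¬ (isGC (X i) ↔ isGC (Y i)) ∧ ¬ isGC (X i)).card
          = (univ.filter fun i => ¬ isGC (X i) ∧ isGC (Y i)).card := by
        congr 1; apply Finset.filter_congr; intro i _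
        constructor
        · rintro ⟨hiff, hx⟩
          refine ⟨hx, ?_⟩
          by_contra hy
          exact hiff ⟨fun h => absurd h hx, fun h => absurd h hy⟩
        · rintro ⟨hx, hy⟩; exact ⟨fun hiff => hx (hiff.2 hy), hx⟩
      rw [hham, ← hsplit1, hne, ← hsplit2, he1, he2, c1]
      omega
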